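/- Let P*_n(x,z) = Σ_{σ ∈ S_n} x^{jump(σ)} z^{lsuc(σ)} with P*_0 = 1, and P_n(x,z) = Σ_{σ ∈ S_n} x^{asc(σ)} z^{suc(σ)} with P_0 = 1. Then for every n ≥ 1, P_n(x,z) = P*_n(x, xz) + x(1-z)·P*_{n-1}(x, xz) as an identity of polynomials in ℤ[x,z]. -/

import Mathlib

open Finset

/-- The value `σ(i)` of a permutation of `{1,…,n}` at a one-based position `i`,
with the convention `σ(0) = 0` (and value `0` outside `[1,n]`). -/
def pv {n : ℕ} (σ : Equiv.Perm (Fin n)) (i : ℕ) : ℕ :=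
  if h : 1 ≤ i ∧ i ≤ n then ((σ ⟨i - 1, by omega⟩ : Fin n) : ℕ) + 1 else 0

/-- Number of excedances: indices `i` with `σ(i) > i`. -/
def exc {n : ℕ} (σ : Equiv.Perm (Fin n)) : ℕ :=
  ((Finset.Icc 1 n).filter (fun i => i < pv σ i)).card

/-- Number of fixed points: indices `i` with `σ(i) = i`. -/
def fixpt {n : ℕ} (σ : Equiv.Perm (Fin n)) : ℕ :=
  ((Finset.Icc 1 n).filter (fun i => pv σ i = i)).card

/-- Number of left successions: indices `1 ≤ i ≤ n` with `σ(i-1) + 1 = σ(i)`. -/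
def lsuc {n : ℕ} (σ : Equiv.Perm (Fin n)) : ℕ :=
  ((Finset.Icc 1 n).filter (fun i => pv σ (i - 1) + 1 = pv σ i)).card

/-- Number of jumps: indices `1 ≤ i ≤ n` with `σ(i) ≥ σ(i-1) + 2`. -/
def jump {n : ℕ} (σ : Equiv.Perm (Fin n)) : ℕ :=
  ((Finset.Icc 1 n).filter (fun i => pv σ (i - 1) + 2 ≤ pv σ i)).card

/-- Number of interior successions: indices `1 ≤ i ≤ n-1` with `σ(i) + 1 = σ(i+1)`. -/
def suc {n : ℕ} (σ : Equiv.Perm (Fin n)) : ℕ :=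
  ((Finset.Icc 1 (n - 1)).filter (fun i => pv σ i + 1 = pv σ (i + 1))).card

/-- Number of ascents: indices `0 ≤ i ≤ n-1` with `σ(i) < σ(i+1)` (with `σ(0) = 0`). -/
def asc {n : ℕ} (σ : Equiv.Perm (Fin n)) : ℕ :=
  ((Finset.range n).filter (fun i => pv σ i < pv σ (i + 1))).card

open MvPolynomial

/-- `P*_n(x,z) = Σ_{σ ∈ S_n} x^{jump σ} z^{lsuc σ}` with `x = X 0`, `z = X 1`. -/
noncomputable def Pstar (n : ℕ) : MvPolynomial (Fin 2) ℤ :=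
  ∑ σ : Equiv.Perm (Fin n), X 0 ^ jump σ * X 1 ^ lsuc σ

/-- `P_n(x,z) = Σ_{σ ∈ S_n} x^{asc σ} z^{suc σ}`. -/
noncomputable def Ppoly (n : ℕ) : MvPolynomial (Fin 2) ℤ :=
  ∑ σ : Equiv.Perm (Fin n), X 0 ^ asc σ * X 1 ^ suc σ

/-- The substitution `x ↦ x`, `z ↦ x z`. -/
noncomputable def subXZ : MvPolynomial (Fin 2) ℤ →ₐ[ℤ] MvPolynomial (Fin 2) ℤ :=
  MvPolynomial.aeval ![X 0, X 0 * X 1]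

section RoselleAux

variable {m : ℕ}

lemma pv_of {n : ℕ} (σ : Equiv.Perm (Fin n)) {i : ℕ} (h1 : 1 ≤ i) (h2 : i ≤ n) :
    pv σ i = ((σ ⟨i - 1, by omega⟩ : Fin n) : ℕ) + 1 := dif_pos ⟨h1, h2⟩

lemma pv_zero {n : ℕ} (σ : Equiv.Perm (Fin n)) : pv σ 0 = 0 := dif_neg (by omega)

lemma card_shift (p : ℕ → Prop) [DecidablePred p] (b : ℕ) :
    ((Icc 1 (b+1)).filter p).card = ((Icc 0 b).filter (fun i => p (i+1))).card := by
  symm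
  apply Finset.card_bij (fun i _ => i + 1)
  · intro a ha
    simp only [mem_filter, mem_Icc] at ha ⊢
    exact ⟨by omega, ha.2⟩
  · intro a _ b _ h; omega
  · intro c hc
    simp only [mem_filter, mem_Icc] at hc
    refine ⟨c - 1, ?_, by omega⟩
    simp only [mem_filter, mem_Icc]
    refine ⟨by omega, ?_⟩
    have : c - 1 + 1 = c := by omega
    rw [this]; exact hc.2

lemma jump_eq (σ : Equiv.Perm (Fin (m+1))) :
    jump σ = ((Icc 0 m).filter (fun i => pv σ i + 2 ≤ pv σ (i+1))).card := by
  rw [jump, card_shift]; simp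

lemma lsuc_eq (σ : Equiv.Perm (Fin (m+1))) :
    lsuc σ = ((Icc 0 m).filter (fun i => pv σ i + 1 = pv σ (i+1))).card := by
  rw [lsuc, card_shift]; simp

lemma asc_eq (σ : Equiv.Perm (Fin (m+1))) :
    asc σ = ((Icc 0 m).filter (fun i => pv σ i < pv σ (i+1))).card := by
  rw [asc]
  have h : Finset.range (m+1) = Icc 0 m := by ext x; simp
  rw [h]

lemma suc_eq (σ : Equiv.Perm (Fin (m+1))) :
    suc σ = ((Icc 1 m).filter (fun i => pv σ i + 1 = pv σ (i+1))).card := by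
  rw [suc]; norm_num

lemma icc_zero_eq : Icc 0 m = insert 0 (Icc 1 m) := by
  ext x; simp [Finset.mem_Icc, Finset.mem_insert]; omega

lemma asc_eq_jump_add_lsuc (σ : Equiv.Perm (Fin (m+1))) : asc σ = jump σ + lsuc σ := by
  rw [asc_eq, jump_eq, lsuc_eq, ← Finset.card_union_of_disjoint ?_, ← Finset.filter_or]
  · refine congrArg Finset.card (Finset.filter_congr ?_)
    intro x _
    omega
  · rw [Finset.disjoint_left]
    intro a ha hb
    simp only [mem_filter] at ha hb
    omega

lemma lsuc_eq_suc (σ : Equiv.Perm (Fin (m+1))) :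
    lsuc σ = suc σ + (if pv σ 1 = 1 then 1 else 0) := by
  rw [lsuc_eq, suc_eq, icc_zero_eq, Finset.filter_insert]
  by_cases h : pv σ 1 = 1
  · rw [if_pos (by simp only [pv_zero, Nat.zero_add]; omega), if_pos h,
      Finset.card_insert_of_notMem (by simp)]
  · rw [if_neg (by simp only [pv_zero, Nat.zero_add]; omega), if_neg h]
    simp

/-- The embedding `S_m → S_{m+1}` fixing position 1 (zero-based point `0`). -/
noncomputable def permF (m : ℕ) (τ : Equiv.Perm (Fin m)) : Equiv.Perm (Fin (m+1)) :=
  Equiv.Perm.decomposeFin.symm (0, τ)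

lemma pv_permF (τ : Equiv.Perm (Fin m)) {i : ℕ} (h1 : 1 ≤ i) (h2 : i ≤ m + 1) :
    pv (permF m τ) i = pv τ (i-1) + 1 := by
  rcases Nat.lt_or_ge i 2 with hi | hi
  · have : i = 1 := by omega
    subst this
    rw [pv_of _ le_rfl h2]
    have h0 : (⟨1 - 1, by omega⟩ : Fin (m+1)) = 0 := rfl
    rw [h0]
    rw [permF, Equiv.Perm.decomposeFin_symm_apply_zero]
    simp [pv_zero]
  · rw [pv_of _ h1 h2, pv_of τ (by omega) (by omega)]
    have hs : (⟨i - 1, by omega⟩ : Fin (m+1)) = Fin.succ ⟨i - 2, by omega⟩ := by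
      apply Fin.ext; simp; omega
    rw [hs, permF, Equiv.Perm.decomposeFin_symm_apply_succ]
    have h2' : (⟨i - 1 - 1, by omega⟩ : Fin m) = ⟨i - 2, by omega⟩ := by
      apply Fin.ext; simp; omega
    rw [h2']
    simp [Equiv.swap_self]

lemma pv_permF_one (τ : Equiv.Perm (Fin m)) : pv (permF m τ) 1 = 1 := by
  rw [pv_permF τ le_rfl (by omega)]
  simp [pv_zero]

lemma jump_permF (τ : Equiv.Perm (Fin m)) : jump (permF m τ) = jump τ := by
  rw [jump_eq, jump, icc_zero_eq, Finset.filter_insert, if_neg]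
  · refine congrArg Finset.card (Finset.filter_congr ?_)
    intro x hx
    simp only [Finset.mem_Icc] at hx
    rw [pv_permF τ (by omega) (by omega), pv_permF τ (by omega) (by omega)]
    have : x + 1 - 1 = x := by omega
    rw [this]
    omega
  · simp only [Nat.zero_add, pv_zero, pv_permF_one]
    omega

lemma lsuc_permF (τ : Equiv.Perm (Fin m)) : lsuc (permF m τ) = lsuc τ + 1 := by
  rw [lsuc_eq, lsuc, icc_zero_eq, Finset.filter_insert, if_pos]
  · rw [Finset.card_insert_of_notMem (by simp)]
    congr 1
    refine congrArg Finset.card (Finset.filter_congr ?_)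
    intro x hx
    simp only [Finset.mem_Icc] at hx
    rw [pv_permF τ (by omega) (by omega), pv_permF τ (by omega) (by omega)]
    have : x + 1 - 1 = x := by omega
    rw [this]
    omega
  · simp only [Nat.zero_add, pv_zero, pv_permF_one]

lemma permF_injective (τ₁ τ₂ : Equiv.Perm (Fin m)) (h : permF m τ₁ = permF m τ₂) :
    τ₁ = τ₂ := by
  have := Equiv.Perm.decomposeFin.symm.injective (a₁ := (0, τ₁)) (a₂ := (0, τ₂)) h
  exact (Prod.mk.injEq _ _ _ _ ▸ this).2

lemma permF_surj (σ : Equiv.Perm (Fin (m+1))) (h : pv σ 1 = 1) :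
    ∃ τ : Equiv.Perm (Fin m), permF m τ = σ := by
  refine ⟨(Equiv.Perm.decomposeFin σ).2, ?_⟩
  have hσ0 : σ 0 = 0 := by
    rw [pv_of σ le_rfl (by omega)] at h
    have h0 : (⟨1 - 1, by omega⟩ : Fin (m+1)) = 0 := rfl
    rw [h0] at h
    apply Fin.ext
    rw [Fin.val_zero]
    omega
  have h1 : (Equiv.Perm.decomposeFin σ).1 = 0 := by
    have := Equiv.Perm.decomposeFin.symm_apply_apply σ
    have h2 := congrArg (fun f : Equiv.Perm (Fin (m+1)) => f 0) this
    rw [show (Equiv.Perm.decomposeFin σ) =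
      ((Equiv.Perm.decomposeFin σ).1, (Equiv.Perm.decomposeFin σ).2) from rfl,
      Equiv.Perm.decomposeFin_symm_apply_zero] at h2
    rw [h2, hσ0]
  rw [permF, ← h1]
  exact Equiv.Perm.decomposeFin.symm_apply_apply σ

lemma subXZ_monomial (a b : ℕ) :
    subXZ (X 0 ^ a * X 1 ^ b) = X 0 ^ (a + b) * X 1 ^ b := by
  rw [subXZ, map_mul, map_pow, map_pow, MvPolynomial.aeval_X, MvPolynomial.aeval_X]
  simp only [Matrix.cons_val_zero, Matrix.cons_val_one, Matrix.head_cons]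
  rw [mul_pow, pow_add]
  ring

lemma subXZ_Pstar (k : ℕ) :
    subXZ (Pstar k) = ∑ σ : Equiv.Perm (Fin k), X 0 ^ (jump σ + lsuc σ) * X 1 ^ lsuc σ := by
  rw [Pstar, map_sum]
  exact Finset.sum_congr rfl fun σ _ => subXZ_monomial _ _

end RoselleAux

/-- Roselle's relation: `P_n(x,z) = P*_n(x,xz) + x(1-z) P*_{n-1}(x,xz)` for `n ≥ 1`. -/
theorem roselle_relation (n : ℕ) (hn : 1 ≤ n) :
    Ppoly n = subXZ (Pstar n) + X 0 * (1 - X 1) * subXZ (Pstar (n - 1)) := by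
  obtain ⟨m, rfl⟩ : ∃ m, n = m + 1 := ⟨n - 1, by omega⟩
  simp only [Nat.add_sub_cancel]
  have hA : ∑ σ ∈ Finset.univ.filter (fun σ : Equiv.Perm (Fin (m+1)) => pv σ 1 = 1),
      (X 0 : MvPolynomial (Fin 2) ℤ) ^ asc σ * X 1 ^ suc σ = X 0 * subXZ (Pstar m) := by
    rw [subXZ_Pstar, Finset.mul_sum]
    symm
    apply Finset.sum_bij (fun τ _ => permF m τ)
    · intro τ _
      simp [pv_permF_one]
    · intro a _ b _ h
      exact permF_injective a b h
    · intro σ hσ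
      simp only [Finset.mem_filter] at hσ
      obtain ⟨τ, hτ⟩ := permF_surj σ hσ.2
      exact ⟨τ, Finset.mem_univ τ, hτ⟩
    · intro τ _
      have hl := lsuc_permF τ
      have hj := jump_permF τ
      have hsuc : suc (permF m τ) = lsuc τ := by
        have hb := lsuc_eq_suc (permF m τ)
        rw [if_pos (pv_permF_one τ), hl] at hb
        omega
      rw [asc_eq_jump_add_lsuc, hj, hl, hsuc]
      ring
  have h1 : Ppoly (m+1)
      = (∑ σ ∈ Finset.univ.filter (fun σ : Equiv.Perm (Fin (m+1)) => pv σ 1 = 1),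
          (X 0 : MvPolynomial (Fin 2) ℤ) ^ asc σ * X 1 ^ suc σ)
      + ∑ σ ∈ Finset.univ.filter (fun σ : Equiv.Perm (Fin (m+1)) => ¬ pv σ 1 = 1),
          (X 0 : MvPolynomial (Fin 2) ℤ) ^ asc σ * X 1 ^ suc σ := by
    rw [Ppoly,
      ← Finset.sum_filter_add_sum_filter_not Finset.univ
        (fun σ : Equiv.Perm (Fin (m+1)) => pv σ 1 = 1)]
  have h2 : subXZ (Pstar (m+1))
      = X 1 * (∑ σ ∈ Finset.univ.filter (fun σ : Equiv.Perm (Fin (m+1)) => pv σ 1 = 1),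
          (X 0 : MvPolynomial (Fin 2) ℤ) ^ asc σ * X 1 ^ suc σ)
      + ∑ σ ∈ Finset.univ.filter (fun σ : Equiv.Perm (Fin (m+1)) => ¬ pv σ 1 = 1),
          (X 0 : MvPolynomial (Fin 2) ℤ) ^ asc σ * X 1 ^ suc σ := by
    rw [subXZ_Pstar,
      ← Finset.sum_filter_add_sum_filter_not Finset.univ
        (fun σ : Equiv.Perm (Fin (m+1)) => pv σ 1 = 1), Finset.mul_sum]
    refine congrArg₂ (· + ·) ?_ ?_
    · apply Finset.sum_congr rfl
      intro σ hσ
      simp only [Finset.mem_filter] at hσ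
      rw [← asc_eq_jump_add_lsuc, lsuc_eq_suc, if_pos hσ.2]
      ring
    · apply Finset.sum_congr rfl
      intro σ hσ
      simp only [Finset.mem_filter] at hσ
      rw [← asc_eq_jump_add_lsuc, lsuc_eq_suc, if_neg hσ.2]
      ring
  rw [h1, h2, hA]
  ring
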